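/- Minimizing over Gaussian policies: let f(μ, Σ) = (1/2)(μᵀ H μ + tr(H Σ)) + bᵀμ + (λ/2)(−log det Σ + log det Σ̃ + tr(Σ̃⁻¹Σ) + (μ−μ̃)ᵀΣ̃⁻¹(μ−μ̃)) with H symmetric positive semidefinite, Σ̃ positive definite, λ > 0. Then f is uniquely minimized over μ ∈ ℝᵐ and symmetric positive definite Σ at Σ* = ((1/λ)H + Σ̃⁻¹)⁻¹ and μ* = −(H + λΣ̃⁻¹)⁻¹(b − λΣ̃⁻¹μ̃). -/

import Mathlib

open Matrix Real

section Aux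

lemma aux_trace_eq_sum_eigenvalues {m : ℕ} {M : Matrix (Fin m) (Fin m) ℝ}
    (hM : M.IsHermitian) : M.trace = ∑ i, hM.eigenvalues i := by
  conv_lhs => rw [hM.spectral_theorem]
  rw [Unitary.conjStarAlgAut_apply, Matrix.trace_mul_cycle]
  have h1 : (star hM.eigenvectorUnitary.1 : Matrix (Fin m) (Fin m) ℝ) * hM.eigenvectorUnitary.1
      = 1 := by simp
  rw [h1, Matrix.one_mul, Matrix.trace_diagonal]
  simp

lemma aux_eq_one_of_eigenvalues {m : ℕ} {M : Matrix (Fin m) (Fin m) ℝ} (hM : M.IsHermitian)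
    (h : ∀ i, hM.eigenvalues i = 1) : M = 1 := by
  rw [hM.spectral_theorem]
  have : Matrix.diagonal (RCLike.ofReal ∘ hM.eigenvalues) = (1 : Matrix (Fin m) (Fin m) ℝ) := by
    ext i j; simp [Matrix.diagonal, Matrix.one_apply, h]
  rw [this, Unitary.conjStarAlgAut_apply, Matrix.mul_one]
  simp

open scoped MatrixOrder in
lemma aux_logdet_key {m : ℕ} {B S : Matrix (Fin m) (Fin m) ℝ} (hB : B.PosDef) (hS : S.PosDef) :
    (m : ℝ) + Real.log B.det ≤ (B * S).trace - Real.log S.det ∧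
      ((B * S).trace - Real.log S.det = (m : ℝ) + Real.log B.det → S = B⁻¹) := by
  set Q := CFC.sqrt B with hQdef
  have hQQ : Q * Q = B := CFC.sqrt_mul_sqrt_self B hB.posSemidef.nonneg
  have hQh : Q.IsHermitian := (Matrix.nonneg_iff_posSemidef.mp (CFC.sqrt_nonneg B)).1
  have hdetB : 0 < B.det := hB.det_pos
  have hdetS : 0 < S.det := hS.det_pos
  have hdetQ : Q.det ≠ 0 := by
    intro h
    rw [← hQQ, Matrix.det_mul, h, mul_zero] at hdetB
    exact lt_irrefl 0 hdetB
  have hQunit : IsUnit Q.det := hdetQ.isUnit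
  set M := Q * S * Q with hMdef
  have hMh : M.IsHermitian := by
    unfold M
    rw [Matrix.IsHermitian, Matrix.conjTranspose_mul, Matrix.conjTranspose_mul, hQh.eq, hS.1.eq,
      Matrix.mul_assoc]
  have hM : M.PosDef := by
    refine Matrix.PosDef.of_dotProduct_mulVec_pos hMh (fun x hx => ?_)
    have hQx : Q.mulVec x ≠ 0 := by
      intro h
      exact hx (Matrix.mulVec_injective_iff_isUnit.mpr (Matrix.isUnit_iff_isUnit_det Q |>.2 hQunit)
        |>.eq_iff.mp (by simpa using h))
    have := hS.dotProduct_mulVec_pos hQx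
    simpa [hMdef, star_trivial, ← Matrix.mulVec_mulVec, Matrix.dotProduct_mulVec,
      ← Matrix.mulVec_transpose, hQh.eq.symm ▸ (rfl : Qᴴ = Qᴴ), show Qᵀ = Q from hQh] using this
  have heigpos : ∀ i, 0 < hMh.eigenvalues i := fun i => hM.eigenvalues_pos i
  have htr : M.trace = ∑ i, hMh.eigenvalues i := aux_trace_eq_sum_eigenvalues hMh
  have hdet : M.det = ∏ i, hMh.eigenvalues i := by
    simpa using hMh.det_eq_prod_eigenvalues
  have hdetM : M.det = B.det * S.det := by
    unfold M
    rw [Matrix.det_mul, Matrix.det_mul, ← hQQ, Matrix.det_mul]; ring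
  have htrM : M.trace = (B * S).trace := by
    unfold M
    rw [Matrix.trace_mul_cycle, hQQ]
  have hlogdetM : Real.log M.det = Real.log B.det + Real.log S.det := by
    rw [hdetM, Real.log_mul hdetB.ne' hdetS.ne']
  have hlogsum : Real.log M.det = ∑ i, Real.log (hMh.eigenvalues i) := by
    rw [hdet, Real.log_prod (fun i _ => (heigpos i).ne')]
  have hterm : ∀ i : Fin m, (1 : ℝ) ≤ hMh.eigenvalues i - Real.log (hMh.eigenvalues i) := by
    intro i
    have := Real.log_le_sub_one_of_pos (heigpos i)
    linarith
  have hsum : (m : ℝ) ≤ M.trace - Real.log M.det := by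
    rw [htr, hlogsum, ← Finset.sum_sub_distrib]
    calc (m : ℝ) = ∑ _i : Fin m, (1 : ℝ) := by simp
    _ ≤ _ := Finset.sum_le_sum (fun i _ => hterm i)
  constructor
  · have : (B * S).trace - Real.log S.det = (M.trace - Real.log M.det) + Real.log B.det := by
      rw [htrM, hlogdetM]; ring
    linarith
  · intro heq
    have heq2 : M.trace - Real.log M.det = (m : ℝ) := by
      rw [htrM, hlogdetM] at *; linarith
    have hsum0 : ∑ i, (hMh.eigenvalues i - Real.log (hMh.eigenvalues i) - 1) = 0 := by
      rw [Finset.sum_sub_distrib, Finset.sum_sub_distrib, ← htr, ← hlogsum]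
      simp only [Finset.sum_const, Finset.card_univ, Fintype.card_fin, nsmul_eq_mul, mul_one]
      linarith
    have hall : ∀ i ∈ Finset.univ, hMh.eigenvalues i - Real.log (hMh.eigenvalues i) - 1 = 0 := by
      rw [← Finset.sum_eq_zero_iff_of_nonneg (fun i _ => by linarith [hterm i])]
      exact hsum0
    have heig1 : ∀ i, hMh.eigenvalues i = 1 := by
      intro i
      by_contra hne
      have := Real.log_lt_sub_one_of_pos (heigpos i) hne
      have := hall i (Finset.mem_univ i)
      linarith
    have hM1 : M = 1 := aux_eq_one_of_eigenvalues hMh heig1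
    have h1 : Q⁻¹ * (Q * S * Q) * Q⁻¹ = Q⁻¹ * Q⁻¹ := by rw [← hMdef, hM1, Matrix.mul_one]
    rw [← Matrix.mul_assoc, ← Matrix.mul_assoc, Matrix.nonsing_inv_mul Q hQunit,
      Matrix.one_mul, Matrix.mul_assoc, Matrix.mul_nonsing_inv Q hQunit, Matrix.mul_one] at h1
    rw [h1, ← Matrix.mul_inv_rev, hQQ]

lemma aux_smul_posSemidef {m : ℕ} {A : Matrix (Fin m) (Fin m) ℝ} (hA : A.PosSemidef)
    {c : ℝ} (hc : 0 ≤ c) : (c • A).PosSemidef := by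
  refine ⟨show (c • A)ᴴ = c • A by rw [Matrix.conjTranspose_smul, star_trivial, hA.1.eq],
    fun x => ?_⟩
  exact (Matrix.PosSemidef.smul hA hc).2 x

lemma aux_smul_posDef {m : ℕ} {A : Matrix (Fin m) (Fin m) ℝ} (hA : A.PosDef)
    {c : ℝ} (hc : 0 < c) : (c • A).PosDef := by
  refine ⟨show (c • A)ᴴ = c • A by rw [Matrix.conjTranspose_smul, star_trivial, hA.1.eq],
    fun x hx => ?_⟩
  exact (Matrix.PosDef.smul hA hc).2 hx

lemma aux_quad_key {m : ℕ} {A : Matrix (Fin m) (Fin m) ℝ} (hA : A.PosDef) (hAs : Aᵀ = A)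
    (c μ : Fin m → ℝ) :
    (1/2) * ((-(A⁻¹.mulVec c)) ⬝ᵥ A.mulVec (-(A⁻¹.mulVec c))) + c ⬝ᵥ (-(A⁻¹.mulVec c))
      ≤ (1/2) * (μ ⬝ᵥ A.mulVec μ) + c ⬝ᵥ μ ∧
    ((1/2) * (μ ⬝ᵥ A.mulVec μ) + c ⬝ᵥ μ =
      (1/2) * ((-(A⁻¹.mulVec c)) ⬝ᵥ A.mulVec (-(A⁻¹.mulVec c))) + c ⬝ᵥ (-(A⁻¹.mulVec c)) →
      μ = -(A⁻¹.mulVec c)) := by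
  set μs := -(A⁻¹.mulVec c) with hμs
  have hAc : A.mulVec μs = -c := by
    rw [hμs, Matrix.mulVec_neg, Matrix.mulVec_mulVec,
      Matrix.mul_nonsing_inv _ hA.det_pos.ne'.isUnit, Matrix.one_mulVec]
  have hcomm : ∀ x y : Fin m → ℝ, x ⬝ᵥ A.mulVec y = A.mulVec x ⬝ᵥ y := by
    intro x y
    rw [Matrix.dotProduct_mulVec, ← Matrix.mulVec_transpose, hAs]
  have e2 : μ ⬝ᵥ A.mulVec μs = -(c ⬝ᵥ μ) := by
    rw [hAc, dotProduct_neg, dotProduct_comm]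
  have e3 : μs ⬝ᵥ A.mulVec μ = -(c ⬝ᵥ μ) := by
    rw [hcomm, hAc, neg_dotProduct]
  have e4 : μs ⬝ᵥ A.mulVec μs = -(c ⬝ᵥ μs) := by
    rw [hAc, dotProduct_neg, dotProduct_comm]
  have e1 : (μ - μs) ⬝ᵥ A.mulVec (μ - μs)
      = μ ⬝ᵥ A.mulVec μ - μ ⬝ᵥ A.mulVec μs - μs ⬝ᵥ A.mulVec μ + μs ⬝ᵥ A.mulVec μs := by
    simp only [Matrix.mulVec_sub, dotProduct_sub, sub_dotProduct]
    ring
  have key : (1/2) * (μ ⬝ᵥ A.mulVec μ) + c ⬝ᵥ μ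
      - ((1/2) * (μs ⬝ᵥ A.mulVec μs) + c ⬝ᵥ μs)
      = (1/2) * ((μ - μs) ⬝ᵥ A.mulVec (μ - μs)) := by
    rw [e1, e2, e3, e4]; ring
  have hnn : 0 ≤ (μ - μs) ⬝ᵥ A.mulVec (μ - μs) := by
    rcases eq_or_ne (μ - μs) 0 with h | h
    · simp [h]
    · have := hA.dotProduct_mulVec_pos h
      simpa using this.le
  constructor
  · linarith
  · intro heq
    have h0 : (μ - μs) ⬝ᵥ A.mulVec (μ - μs) = 0 := by linarith
    by_contra hne
    have hd : μ - μs ≠ 0 := sub_ne_zero.2 hne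
    have := hA.dotProduct_mulVec_pos hd
    simp only [star_trivial] at this
    linarith

end Aux

/-- The Gaussian-policy objective (expected quadratic cost plus `λ` times the KL divergence to a
Gaussian reference, constants omitted) is uniquely minimized over means `μ` and symmetric positive
definite covariances `Σ` at `Σ* = ((1/λ)H + Σ̃⁻¹)⁻¹` and `μ* = −(H + λΣ̃⁻¹)⁻¹(b − λΣ̃⁻¹μ̃)`. -/
theorem gaussian_policy_unique_minimizer {m : ℕ}
    (H : Matrix (Fin m) (Fin m) ℝ) (hH : H.PosSemidef) (hHsymm : H.IsSymm)
    (b μt : Fin m → ℝ) (St : Matrix (Fin m) (Fin m) ℝ) (hSt : St.PosDef)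
    (l : ℝ) (hl : 0 < l) :
    let f : (Fin m → ℝ) → Matrix (Fin m) (Fin m) ℝ → ℝ := fun μ S =>
      (1/2) * (μ ⬝ᵥ H.mulVec μ + (H * S).trace) + b ⬝ᵥ μ +
        (l/2) * (-(Real.log S.det) + Real.log St.det + (St⁻¹ * S).trace +
          (μ - μt) ⬝ᵥ St⁻¹.mulVec (μ - μt))
    let Sstar := ((1/l) • H + St⁻¹)⁻¹
    let μstar := -(H + l • St⁻¹)⁻¹.mulVec (b - l • St⁻¹.mulVec μt)
    ∀ (μ : Fin m → ℝ) (S : Matrix (Fin m) (Fin m) ℝ), S.PosDef → S.IsSymm →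
      f μstar Sstar ≤ f μ S ∧ (f μ S = f μstar Sstar → μ = μstar ∧ S = Sstar) := by
  intro f Sstar μstar μ S hS _hSsymm
  have hl' : l ≠ 0 := hl.ne'
  set Bm : Matrix (Fin m) (Fin m) ℝ := (1/l) • H + St⁻¹ with hBmdef
  set Am : Matrix (Fin m) (Fin m) ℝ := H + l • St⁻¹ with hAmdef
  set cvec : Fin m → ℝ := b - l • St⁻¹.mulVec μt with hcdef
  have hStinv : St⁻¹.PosDef := hSt.inv
  have hBm : Bm.PosDef :=
    Matrix.PosDef.posSemidef_add (aux_smul_posSemidef hH (by positivity)) hStinv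
  have hAm : Am.PosDef := Matrix.PosDef.posSemidef_add hH (aux_smul_posDef hStinv hl)
  have hAmT : Amᵀ = Am := by
    rw [← Matrix.conjTranspose_eq_transpose_of_trivial]; exact hAm.1
  have hStinvT : St⁻¹ᵀ = St⁻¹ := by
    rw [← Matrix.conjTranspose_eq_transpose_of_trivial]; exact hStinv.1
  have hμstar : μstar = -(Am⁻¹.mulVec cvec) := rfl
  have hSstar : Sstar = Bm⁻¹ := rfl
  -- symmetry of St⁻¹ as dot products
  have hc2 : ∀ x y : Fin m → ℝ, x ⬝ᵥ St⁻¹.mulVec y = St⁻¹.mulVec y ⬝ᵥ x := fun x y =>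
    dotProduct_comm _ _
  have hc3 : ∀ x y : Fin m → ℝ, x ⬝ᵥ St⁻¹.mulVec y = St⁻¹.mulVec x ⬝ᵥ y := by
    intro x y
    rw [Matrix.dotProduct_mulVec, ← Matrix.mulVec_transpose, hStinvT]
  -- decomposition of f
  have hdecomp : ∀ (ν : Fin m → ℝ) (T : Matrix (Fin m) (Fin m) ℝ),
      f ν T = ((1/2) * (ν ⬝ᵥ Am.mulVec ν) + cvec ⬝ᵥ ν)
        + (l/2) * ((Bm * T).trace - Real.log T.det)
        + (l/2) * (Real.log St.det + μt ⬝ᵥ St⁻¹.mulVec μt) := by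
    intro ν T
    have tr_eq : (Bm * T).trace = (1/l) * (H * T).trace + (St⁻¹ * T).trace := by
      rw [hBmdef, Matrix.add_mul, Matrix.smul_mul, Matrix.trace_add, Matrix.trace_smul,
        smul_eq_mul]
    have qd : ν ⬝ᵥ Am.mulVec ν = ν ⬝ᵥ H.mulVec ν + l * (ν ⬝ᵥ St⁻¹.mulVec ν) := by
      rw [hAmdef, Matrix.add_mulVec, dotProduct_add, Matrix.smul_mulVec,
        dotProduct_smul, smul_eq_mul]
    have cross : (ν - μt) ⬝ᵥ St⁻¹.mulVec (ν - μt)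
        = ν ⬝ᵥ St⁻¹.mulVec ν - 2 * ((St⁻¹.mulVec μt) ⬝ᵥ ν) + μt ⬝ᵥ St⁻¹.mulVec μt := by
      have h1 : ν ⬝ᵥ St⁻¹.mulVec μt = (St⁻¹.mulVec μt) ⬝ᵥ ν := hc2 ν μt
      have h2 : μt ⬝ᵥ St⁻¹.mulVec ν = (St⁻¹.mulVec μt) ⬝ᵥ ν := hc3 μt ν
      simp only [Matrix.mulVec_sub, dotProduct_sub, sub_dotProduct]
      rw [h1, h2]; ring
    have cv : cvec ⬝ᵥ ν = b ⬝ᵥ ν - l * ((St⁻¹.mulVec μt) ⬝ᵥ ν) := by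
      rw [hcdef, sub_dotProduct, smul_dotProduct, smul_eq_mul]
    show (1/2) * (ν ⬝ᵥ H.mulVec ν + (H * T).trace) + b ⬝ᵥ ν +
        (l/2) * (-(Real.log T.det) + Real.log St.det + (St⁻¹ * T).trace +
          (ν - μt) ⬝ᵥ St⁻¹.mulVec (ν - μt)) = _
    rw [tr_eq, qd, cross, cv]
    field_simp
    ring
  -- value at the optimum
  have hBmTr : (Bm * Sstar).trace = (m : ℝ) := by
    rw [hSstar, Matrix.mul_nonsing_inv _ hBm.det_pos.ne'.isUnit, Matrix.trace_one]
    simp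
  have hBmDet : Real.log Sstar.det = -Real.log Bm.det := by
    rw [hSstar, Matrix.det_nonsing_inv, Ring.inverse_eq_inv', Real.log_inv]
  have hfstar : f μstar Sstar = ((1/2) * (μstar ⬝ᵥ Am.mulVec μstar) + cvec ⬝ᵥ μstar)
      + (l/2) * ((m : ℝ) + Real.log Bm.det)
      + (l/2) * (Real.log St.det + μt ⬝ᵥ St⁻¹.mulVec μt) := by
    rw [hdecomp μstar Sstar, hBmTr, hBmDet]; ring
  have hquad := aux_quad_key hAm hAmT cvec μ
  rw [← hμstar] at hquad
  have hlog := aux_logdet_key hBm hS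
  have hl2 : 0 < l/2 := by positivity
  constructor
  · rw [hdecomp μ S, hfstar]
    have h1 := hquad.1
    have h2 := hlog.1
    nlinarith [hquad.1, hlog.1, hl2]
  · intro heq
    rw [hdecomp μ S, hfstar] at heq
    have h1 := hquad.1
    have h2 := hlog.1
    have hq0 : (1/2) * (μ ⬝ᵥ Am.mulVec μ) + cvec ⬝ᵥ μ
        = (1/2) * (μstar ⬝ᵥ Am.mulVec μstar) + cvec ⬝ᵥ μstar := by nlinarith
    have hd0 : (Bm * S).trace - Real.log S.det = (m : ℝ) + Real.log Bm.det := by nlinarith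
    refine ⟨?_, ?_⟩
    · exact hquad.2 hq0
    · rw [hSstar]; exact hlog.2 hd0
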